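/- Fix ξ ∈ ℝ, let α = ξ and ν = ξ², and let u be a normalized (α,ξ,ν)-eigenfunction. Then M₁ = u(0)²/2, M₂ = (ξ²−1)/2 + ξu(0)²/4, M₃ = (ξ²−1)u(0)²/2, and M₄ = 3/8 + (3/8)(ξ²−1)² + (u(0)²/16)(5ξ³ − 9ξ). -/

import Mathlib

open MeasureTheory

/-- An `(α,ξ,ν)`-eigenfunction: a smooth function on `ℝ` which, together with all its
derivatives, decays faster than any polynomial on `[0,∞)`, solves
`−u'' + ((ξ−t)² + 1)u = νu` on `[0,∞)`, and satisfies the Robin condition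
`u'(0) = (α−ξ)u(0)`. -/
def IsEigen (α ξ ν : ℝ) (u : ℝ → ℝ) : Prop :=
  ContDiff ℝ (⊤ : ℕ∞) u ∧
  (∀ n k : ℕ, ∃ C : ℝ, ∀ t : ℝ, 0 ≤ t → |t| ^ k * |iteratedDeriv n u t| ≤ C) ∧
  (∀ t : ℝ, 0 ≤ t → -(deriv (deriv u) t) + ((ξ - t) ^ 2 + 1) * u t = ν * u t) ∧
  deriv u 0 = (α - ξ) * u 0

open Set Filter Topology

private lemma aux_pow_bound (t : ℝ) (ht : 0 ≤ t) (m : ℕ) :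
    (1 + t) ^ m ≤ 2 ^ m * (1 + t ^ m) := by
  calc (1 + t) ^ m ≤ 2 ^ (m - 1) * (1 ^ m + t ^ m) := add_pow_le zero_le_one ht m
    _ ≤ 2 ^ m * (1 + t ^ m) := by
        rw [one_pow]
        have h2 : (2:ℝ) ^ (m - 1) ≤ 2 ^ m := by
          apply pow_le_pow_right₀ (by norm_num) (Nat.sub_le m 1)
        have : (0:ℝ) ≤ 1 + t ^ m := by positivity
        nlinarith

private lemma aux_master (ξ : ℝ) (f g : ℝ → ℝ) (hfc : Continuous f) (hgc : Continuous g)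
    (hf : ∀ k : ℕ, ∃ C : ℝ, ∀ t : ℝ, 0 ≤ t → |t| ^ k * |f t| ≤ C)
    (hg : ∃ C : ℝ, ∀ t : ℝ, 0 ≤ t → |g t| ≤ C) (j : ℕ) :
    IntegrableOn (fun t : ℝ => (ξ - t) ^ j * (f t * g t)) (Ioi 0) ∧
      Tendsto (fun t : ℝ => (ξ - t) ^ j * (f t * g t)) atTop (𝓝 0) := by
  obtain ⟨C0, hC0⟩ := hf 0
  obtain ⟨C1, hC1⟩ := hf (j + 2)
  obtain ⟨Cg, hCg⟩ := hg
  have hC0' : ∀ t : ℝ, 0 ≤ t → |f t| ≤ C0 := fun t ht => by simpa using hC0 t ht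
  set K : ℝ := (1 + |ξ|) ^ j * (2 ^ (j + 2) * (C0 + C1) * Cg) with hK
  have hbd : ∀ t : ℝ, 0 ≤ t → |(ξ - t) ^ j * (f t * g t)| ≤ K / (1 + t ^ 2) := by
    intro t ht
    rw [le_div_iff₀ (by positivity)]
    have h1 : |ξ - t| ≤ (1 + |ξ|) * (1 + t) := by
      have h1a := le_abs_self ξ
      have h1b := neg_abs_le ξ
      have h1c := abs_nonneg ξ
      rw [abs_le]
      constructor <;> nlinarith
    have hfb : (1 + t) ^ (j + 2) * |f t| ≤ 2 ^ (j + 2) * (C0 + C1) := by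
      have h2 := aux_pow_bound t ht (j + 2)
      have h3 : t ^ (j + 2) * |f t| ≤ C1 := by
        have h3' := hC1 t ht; rwa [abs_of_nonneg ht] at h3'
      have h4 := hC0' t ht
      have h5 : (0:ℝ) ≤ |f t| := abs_nonneg _
      have hp : (0:ℝ) ≤ 2 ^ (j + 2) := by positivity
      have e1 := mul_le_mul_of_nonneg_right h2 h5
      have e2 := mul_le_mul_of_nonneg_left h3 hp
      have e3 := mul_le_mul_of_nonneg_left h4 hp
      nlinarith [e1, e2, e3]
    have hCgn : (0:ℝ) ≤ Cg := le_trans (abs_nonneg _) (hCg 0 le_rfl)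
    have hgb := hCg t ht
    calc |(ξ - t) ^ j * (f t * g t)| * (1 + t ^ 2)
        = |ξ - t| ^ j * (|f t| * |g t|) * (1 + t ^ 2) := by
          rw [abs_mul, abs_mul, abs_pow]
      _ ≤ (1 + |ξ|) ^ j * (1 + t) ^ j * (|f t| * Cg) * (1 + t) ^ 2 := by
          have hx1 : |ξ - t| ^ j ≤ (1 + |ξ|) ^ j * (1 + t) ^ j := by
            rw [← mul_pow]; exact pow_le_pow_left₀ (abs_nonneg _) h1 j
          have hx2 : (1:ℝ) + t ^ 2 ≤ (1 + t) ^ 2 := by nlinarith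
          have hx3 : |f t| * |g t| ≤ |f t| * Cg :=
            mul_le_mul_of_nonneg_left hgb (abs_nonneg _)
          have := mul_le_mul hx1 hx3 (by positivity) (by positivity)
          exact mul_le_mul this hx2 (by positivity) (by positivity)
      _ = (1 + |ξ|) ^ j * Cg * ((1 + t) ^ (j + 2) * |f t|) := by ring
      _ ≤ (1 + |ξ|) ^ j * Cg * (2 ^ (j + 2) * (C0 + C1)) := by
          apply mul_le_mul_of_nonneg_left hfb (by positivity)
      _ = K := by rw [hK]; ring
  constructor
  · have hdom : IntegrableOn (fun t : ℝ => K * (1 + t ^ 2)⁻¹) (Ioi 0) :=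
      (integrable_inv_one_add_sq.const_mul K).integrableOn
    refine hdom.mono' (Continuous.aestronglyMeasurable ?_).restrict ?_
    · exact ((continuous_const.sub continuous_id).pow j).mul (hfc.mul hgc)
    · filter_upwards [ae_restrict_mem measurableSet_Ioi] with t ht
      rw [Real.norm_eq_abs]
      calc |(ξ - t) ^ j * (f t * g t)| ≤ K / (1 + t ^ 2) := hbd t (le_of_lt ht)
        _ = K * (1 + t ^ 2)⁻¹ := div_eq_mul_inv _ _
  · have hK0 : Tendsto (fun t : ℝ => K / (1 + t ^ 2)) atTop (𝓝 0) := by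
      apply Tendsto.div_atTop tendsto_const_nhds
      exact tendsto_atTop_add_const_left _ 1 (tendsto_pow_atTop (by norm_num))
    refine (tendsto_zero_iff_abs_tendsto_zero (fun t : ℝ => (ξ - t) ^ j * (f t * g t))).mpr ?_
    exact squeeze_zero' (Eventually.of_forall fun t => abs_nonneg _)
      (eventually_atTop.2 ⟨0, fun t ht => hbd t ht⟩) hK0

set_option maxHeartbeats 1000000 in
/-- Moments `M₁, M₂, M₃, M₄` of a normalized `(ξ,ξ,ξ²)`-eigenfunction. -/
theorem moments_special_case
    (ξ : ℝ) (u : ℝ → ℝ) (hu : IsEigen ξ ξ (ξ ^ 2) u)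
    (hnorm : ∫ t in Set.Ioi (0 : ℝ), u t ^ 2 = 1) :
    (∫ t in Set.Ioi (0 : ℝ), (ξ - t) * u t ^ 2 = u 0 ^ 2 / 2) ∧
    (∫ t in Set.Ioi (0 : ℝ), (ξ - t) ^ 2 * u t ^ 2
        = (ξ ^ 2 - 1) / 2 + ξ * u 0 ^ 2 / 4) ∧
    (∫ t in Set.Ioi (0 : ℝ), (ξ - t) ^ 3 * u t ^ 2
        = (ξ ^ 2 - 1) * u 0 ^ 2 / 2) ∧
    (∫ t in Set.Ioi (0 : ℝ), (ξ - t) ^ 4 * u t ^ 2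
        = 3 / 8 + 3 / 8 * (ξ ^ 2 - 1) ^ 2 + u 0 ^ 2 / 16 * (5 * ξ ^ 3 - 9 * ξ)) := by
  classical
  obtain ⟨hs, hd, hode, hbc⟩ := hu
  have hcu : Continuous u := hs.continuous
  have hs1 : ContDiff ℝ (⊤ : ℕ∞) (deriv u) := (contDiff_infty_iff_deriv.mp hs).2
  have hcu1 : Continuous (deriv u) := hs1.continuous
  have hdiffu : ∀ t : ℝ, HasDerivAt u (deriv u t) t :=
    fun t => (hs.differentiable (by simp) t).hasDerivAt
  have hdiffu1 : ∀ t : ℝ, HasDerivAt (deriv u) (deriv (deriv u) t) t :=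
    fun t => (hs1.differentiable (by simp) t).hasDerivAt
  have hbc0 : deriv u 0 = 0 := by rw [hbc]; ring
  have hode' : ∀ t : ℝ, 0 ≤ t → deriv (deriv u) t = ((ξ - t) ^ 2 + 1 - ξ ^ 2) * u t :=
    fun t ht => by linear_combination -(hode t ht)
  have hdecu : ∀ k : ℕ, ∃ C : ℝ, ∀ t : ℝ, 0 ≤ t → |t| ^ k * |u t| ≤ C := by
    intro k; obtain ⟨C, hC⟩ := hd 0 k
    exact ⟨C, fun t ht => by simpa [iteratedDeriv_zero] using hC t ht⟩
  have hdecu1 : ∀ k : ℕ, ∃ C : ℝ, ∀ t : ℝ, 0 ≤ t → |t| ^ k * |deriv u t| ≤ C := by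
    intro k; obtain ⟨C, hC⟩ := hd 1 k
    exact ⟨C, fun t ht => by simpa [iteratedDeriv_one] using hC t ht⟩
  have hgbu : ∃ C : ℝ, ∀ t : ℝ, 0 ≤ t → |u t| ≤ C := by
    obtain ⟨C, hC⟩ := hdecu 0; exact ⟨C, fun t ht => by simpa using hC t ht⟩
  have hgbu1 : ∃ C : ℝ, ∀ t : ℝ, 0 ≤ t → |deriv u t| ≤ C := by
    obtain ⟨C, hC⟩ := hdecu1 0; exact ⟨C, fun t ht => by simpa using hC t ht⟩
  have keyMM := fun j => aux_master ξ u u hcu hcu hdecu hgbu j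
  have keyMA := fun j => aux_master ξ u (deriv u) hcu hcu1 hdecu hgbu1 j
  have keyBB := fun j => aux_master ξ (deriv u) (deriv u) hcu1 hcu1 hdecu1 hgbu1 j
  -- relation F
  have relF : ∀ j : ℕ,
      -(j : ℝ) * (∫ t in Set.Ioi (0:ℝ), (ξ - t) ^ (j - 1) * (u t * u t))
        + 2 * (∫ t in Set.Ioi (0:ℝ), (ξ - t) ^ j * (u t * deriv u t))
      = -(ξ ^ j * (u 0 * u 0)) := by
    intro j
    have hder : ∀ t : ℝ, HasDerivAt (fun s => (ξ - s) ^ j * (u s * u s))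
        (-(j : ℝ) * ((ξ - t) ^ (j - 1) * (u t * u t))
          + 2 * ((ξ - t) ^ j * (u t * deriv u t))) t := by
      intro t
      have hw : HasDerivAt (fun s : ℝ => ξ - s) (-1) t := by
        simpa using (hasDerivAt_id t).const_sub ξ
      have h1 := (hw.pow j).mul ((hdiffu t).mul (hdiffu t))
      convert h1 using 1
      · rfl
      · rfl
      · rfl
      simp only [Pi.mul_apply, Pi.pow_apply]
      ring
    have hi1 : MeasureTheory.IntegrableOn
        (fun t : ℝ => -(j : ℝ) * ((ξ - t) ^ (j - 1) * (u t * u t))) (Set.Ioi 0) :=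
      (keyMM (j - 1)).1.const_mul _
    have hi2 : MeasureTheory.IntegrableOn
        (fun t : ℝ => 2 * ((ξ - t) ^ j * (u t * deriv u t))) (Set.Ioi 0) :=
      (keyMA j).1.const_mul _
    have heq := integral_Ioi_of_hasDerivAt_of_tendsto
      (f := fun s : ℝ => (ξ - s) ^ j * (u s * u s))
      (f' := fun t : ℝ => -(j : ℝ) * ((ξ - t) ^ (j - 1) * (u t * u t))
          + 2 * ((ξ - t) ^ j * (u t * deriv u t)))
      (m := 0)
      (Continuous.continuousWithinAt (by fun_prop))
      (fun t _ => hder t) (hi1.add hi2) (keyMM j).2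
    rw [integral_add hi1 hi2, integral_const_mul, integral_const_mul] at heq
    simpa using heq
  -- relation G
  have relG : ∀ j : ℕ,
      -(j : ℝ) * (∫ t in Set.Ioi (0:ℝ), (ξ - t) ^ (j - 1) * (u t * deriv u t))
        + ((∫ t in Set.Ioi (0:ℝ), (ξ - t) ^ j * (deriv u t * deriv u t))
          + ((∫ t in Set.Ioi (0:ℝ), (ξ - t) ^ (j + 2) * (u t * u t))
            + (1 - ξ ^ 2) * (∫ t in Set.Ioi (0:ℝ), (ξ - t) ^ j * (u t * u t))))
      = 0 := by
    intro j
    have hder : ∀ t ∈ Set.Ioi (0:ℝ), HasDerivAt (fun s => (ξ - s) ^ j * (u s * deriv u s))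
        (-(j : ℝ) * ((ξ - t) ^ (j - 1) * (u t * deriv u t))
          + ((ξ - t) ^ j * (deriv u t * deriv u t)
            + ((ξ - t) ^ (j + 2) * (u t * u t)
              + (1 - ξ ^ 2) * ((ξ - t) ^ j * (u t * u t))))) t := by
      intro t ht
      have hw : HasDerivAt (fun s : ℝ => ξ - s) (-1) t := by
        simpa using (hasDerivAt_id t).const_sub ξ
      have h1 := (hw.pow j).mul ((hdiffu t).mul (hdiffu1 t))
      convert h1 using 1
      · rfl
      · rfl
      · rfl
      simp only [Pi.mul_apply, Pi.pow_apply]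
      rw [hode' t (le_of_lt ht)]
      ring
    have hi1 : MeasureTheory.IntegrableOn
        (fun t : ℝ => -(j : ℝ) * ((ξ - t) ^ (j - 1) * (u t * deriv u t))) (Set.Ioi 0) :=
      (keyMA (j - 1)).1.const_mul _
    have hi2 := (keyBB j).1
    have hi3 := (keyMM (j + 2)).1
    have hi4 : MeasureTheory.IntegrableOn
        (fun t : ℝ => (1 - ξ ^ 2) * ((ξ - t) ^ j * (u t * u t))) (Set.Ioi 0) :=
      (keyMM j).1.const_mul _
    have hi34 : MeasureTheory.IntegrableOn
        (fun t : ℝ => (ξ - t) ^ (j + 2) * (u t * u t)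
          + (1 - ξ ^ 2) * ((ξ - t) ^ j * (u t * u t))) (Set.Ioi 0) := hi3.add hi4
    have hi234 : MeasureTheory.IntegrableOn
        (fun t : ℝ => (ξ - t) ^ j * (deriv u t * deriv u t)
          + ((ξ - t) ^ (j + 2) * (u t * u t)
            + (1 - ξ ^ 2) * ((ξ - t) ^ j * (u t * u t)))) (Set.Ioi 0) := hi2.add hi34
    have heq := integral_Ioi_of_hasDerivAt_of_tendsto
      (f := fun s : ℝ => (ξ - s) ^ j * (u s * deriv u s))
      (f' := fun t : ℝ => -(j : ℝ) * ((ξ - t) ^ (j - 1) * (u t * deriv u t))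
          + ((ξ - t) ^ j * (deriv u t * deriv u t)
            + ((ξ - t) ^ (j + 2) * (u t * u t)
              + (1 - ξ ^ 2) * ((ξ - t) ^ j * (u t * u t)))))
      (m := 0)
      (Continuous.continuousWithinAt (by fun_prop))
      hder (hi1.add hi234) (keyMA j).2
    rw [integral_add hi1 hi234, integral_add hi2 hi34, integral_add hi3 hi4,
      integral_const_mul, integral_const_mul] at heq
    simpa [hbc0] using heq
  -- relation H
  have relH : ∀ j : ℕ,
      -(j : ℝ) * (∫ t in Set.Ioi (0:ℝ), (ξ - t) ^ (j - 1) * (deriv u t * deriv u t))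
        + (2 * (∫ t in Set.Ioi (0:ℝ), (ξ - t) ^ (j + 2) * (u t * deriv u t))
          + (2 * (1 - ξ ^ 2)) * (∫ t in Set.Ioi (0:ℝ), (ξ - t) ^ j * (u t * deriv u t)))
      = 0 := by
    intro j
    have hder : ∀ t ∈ Set.Ioi (0:ℝ), HasDerivAt (fun s => (ξ - s) ^ j * (deriv u s * deriv u s))
        (-(j : ℝ) * ((ξ - t) ^ (j - 1) * (deriv u t * deriv u t))
          + (2 * ((ξ - t) ^ (j + 2) * (u t * deriv u t))
            + (2 * (1 - ξ ^ 2)) * ((ξ - t) ^ j * (u t * deriv u t)))) t := by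
      intro t ht
      have hw : HasDerivAt (fun s : ℝ => ξ - s) (-1) t := by
        simpa using (hasDerivAt_id t).const_sub ξ
      have h1 := (hw.pow j).mul ((hdiffu1 t).mul (hdiffu1 t))
      convert h1 using 1
      · rfl
      · rfl
      · rfl
      simp only [Pi.mul_apply, Pi.pow_apply]
      rw [hode' t (le_of_lt ht)]
      ring
    have hi1 : MeasureTheory.IntegrableOn
        (fun t : ℝ => -(j : ℝ) * ((ξ - t) ^ (j - 1) * (deriv u t * deriv u t))) (Set.Ioi 0) :=
      (keyBB (j - 1)).1.const_mul _
    have hi2 : MeasureTheory.IntegrableOn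
        (fun t : ℝ => 2 * ((ξ - t) ^ (j + 2) * (u t * deriv u t))) (Set.Ioi 0) :=
      (keyMA (j + 2)).1.const_mul _
    have hi3 : MeasureTheory.IntegrableOn
        (fun t : ℝ => (2 * (1 - ξ ^ 2)) * ((ξ - t) ^ j * (u t * deriv u t))) (Set.Ioi 0) :=
      (keyMA j).1.const_mul _
    have hi23 : MeasureTheory.IntegrableOn
        (fun t : ℝ => 2 * ((ξ - t) ^ (j + 2) * (u t * deriv u t))
          + (2 * (1 - ξ ^ 2)) * ((ξ - t) ^ j * (u t * deriv u t))) (Set.Ioi 0) := hi2.add hi3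
    have heq := integral_Ioi_of_hasDerivAt_of_tendsto
      (f := fun s : ℝ => (ξ - s) ^ j * (deriv u s * deriv u s))
      (f' := fun t : ℝ => -(j : ℝ) * ((ξ - t) ^ (j - 1) * (deriv u t * deriv u t))
          + (2 * ((ξ - t) ^ (j + 2) * (u t * deriv u t))
            + (2 * (1 - ξ ^ 2)) * ((ξ - t) ^ j * (u t * deriv u t))))
      (m := 0)
      (Continuous.continuousWithinAt (by fun_prop))
      hder (hi1.add hi23) (keyBB j).2
    rw [integral_add hi1 hi23, integral_add hi2 hi3, integral_const_mul,
      integral_const_mul, integral_const_mul] at heq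
    simpa [hbc0] using heq
  have hM0 : (∫ t in Set.Ioi (0:ℝ), (ξ - t) ^ 0 * (u t * u t)) = 1 := by
    rw [show (∫ t in Set.Ioi (0:ℝ), (ξ - t) ^ 0 * (u t * u t))
        = ∫ t in Set.Ioi (0:ℝ), u t ^ 2 from
      MeasureTheory.integral_congr_ae (Filter.Eventually.of_forall fun t => by ring)]
    exact hnorm
  have hF0 := relF 0
  have hF1 := relF 1
  have hF2 := relF 2
  have hF3 := relF 3
  have hF4 := relF 4
  have hF5 := relF 5
  have hG0 := relG 0
  have hG1 := relG 1
  have hG2 := relG 2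
  have hH0 := relH 0
  have hH1 := relH 1
  have hH2 := relH 2
  have hH3 := relH 3
  norm_num at hF0 hF1 hF2 hF3 hF4 hF5 hG0 hG1 hG2 hH0 hH1 hH2 hH3 hM0
  have key1 : (∫ t in Set.Ioi (0:ℝ), (ξ - t) * (u t * u t)) = u 0 * u 0 / 2 := by
    linear_combination (1/2) * hH0 - (1/2) * hF2 - ((1 - ξ^2)/2) * hF0
  have key2 : (∫ t in Set.Ioi (0:ℝ), (ξ - t) ^ 2 * (u t * u t))
      = (ξ ^ 2 - 1) / 2 + ξ * (u 0 * u 0) / 4 := by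
    linear_combination (1/4) * hH1 - (1/4) * hF3 - ((1 - ξ^2)/4) * hF1 + (1/4) * hG0
      - ((1 - ξ^2)/2) * hM0
  have key3 : (∫ t in Set.Ioi (0:ℝ), (ξ - t) ^ 3 * (u t * u t))
      = (ξ ^ 2 - 1) * (u 0 * u 0) / 2 := by
    linear_combination (1/6) * hH2 - (1/6) * hF4 - ((1 - ξ^2)/6) * hF2 + (1/3) * hG1
      + (1/6) * hF0 - (2*(1 - ξ^2)/3) * key1
  have key4 : (∫ t in Set.Ioi (0:ℝ), (ξ - t) ^ 4 * (u t * u t))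
      = 3 / 8 + 3 / 8 * (ξ ^ 2 - 1) ^ 2 + (u 0 * u 0) / 16 * (5 * ξ ^ 3 - 9 * ξ) := by
    linear_combination (1/8) * hH3 - (1/8) * hF5 - ((1 - ξ^2)/8) * hF3 + (3/8) * hG2
      + (3/8) * hF1 + (3/8) * hM0 - (3*(1 - ξ^2)/4) * key2
  refine ⟨?_, ?_, ?_, ?_⟩
  · rw [show (∫ t in Set.Ioi (0:ℝ), (ξ - t) * u t ^ 2)
        = ∫ t in Set.Ioi (0:ℝ), (ξ - t) * (u t * u t) from
      MeasureTheory.integral_congr_ae (Filter.Eventually.of_forall fun t => by ring), key1]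
    ring
  · rw [show (∫ t in Set.Ioi (0:ℝ), (ξ - t) ^ 2 * u t ^ 2)
        = ∫ t in Set.Ioi (0:ℝ), (ξ - t) ^ 2 * (u t * u t) from
      MeasureTheory.integral_congr_ae (Filter.Eventually.of_forall fun t => by ring), key2]
    ring
  · rw [show (∫ t in Set.Ioi (0:ℝ), (ξ - t) ^ 3 * u t ^ 2)
        = ∫ t in Set.Ioi (0:ℝ), (ξ - t) ^ 3 * (u t * u t) from
      MeasureTheory.integral_congr_ae (Filter.Eventually.of_forall fun t => by ring), key3]
    ring
  · rw [show (∫ t in Set.Ioi (0:ℝ), (ξ - t) ^ 4 * u t ^ 2)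
        = ∫ t in Set.Ioi (0:ℝ), (ξ - t) ^ 4 * (u t * u t) from
      MeasureTheory.integral_congr_ae (Filter.Eventually.of_forall fun t => by ring), key4]
    ring
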